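/- Let (R, +, ·) be a hyperring and e ∈ R. The transitive closure (λ^e_×)* of the relation λ^e_× is a strongly regular equivalence relation on both (R, +) and (R, ·). -/
import Mathlib


/-- A hyperoperation on `H`: every pair maps to a nonempty subset. -/
structure Hyperop (H : Type*) where
  op : H → H → Set H
  op_nonempty : ∀ x y, (op x y).Nonempty

namespace Hyperop

variable {H : Type*}

/-- Extension of the hyperoperation to subsets. -/
def sop (h : Hyperop H) (A B : Set H) : Set H := ⋃ a ∈ A, ⋃ b ∈ B, h.op a b

/-- Associativity of a hyperoperation (on sets). -/
def IsAssoc (h : Hyperop H) : Prop :=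
  ∀ x y z : H, h.sop (h.op x y) {z} = h.sop {x} (h.op y z)

/-- Reproduction axiom: `x ∘ H = H ∘ x = H`. -/
def IsReproductive (h : Hyperop H) : Prop :=
  ∀ x y : H, (∃ u, y ∈ h.op x u) ∧ (∃ v, y ∈ h.op v x)

/-- A relation `T` is strongly regular (on both sides) w.r.t. `h`. -/
def StronglyRegular (h : Hyperop H) (T : H → H → Prop) : Prop :=
  ∀ x y, T x y → ∀ a : H,
    (∀ u ∈ h.op a x, ∀ v ∈ h.op a y, T u v) ∧
    (∀ u ∈ h.op x a, ∀ v ∈ h.op y a, T u v)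

/-- `h.foldl x l` : the set `x ∘ l₁ ∘ ⋯ ∘ lₖ`. -/
def foldl (h : Hyperop H) : H → List H → Set H
  | x, [] => {x}
  | x, y :: l => ⋃ z ∈ h.op x y, h.foldl z l

/-- Hyper-"product" of a nonempty list of elements (empty list gives `∅`). -/
def listProd (h : Hyperop H) : List H → Set H
  | [] => ∅
  | x :: l => h.foldl x l

/-- Fold a list of subsets onto a subset. -/
def setFold (h : Hyperop H) : Set H → List (Set H) → Set H
  | A, [] => A
  | A, B :: l => h.setFold (h.sop A B) l

end Hyperop

/-- `l'` is obtained from `l` by inserting one consecutive block of copies of `e`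
(or is equal to `l`). -/
def InsertBlock {α : Type*} (e : α) (l l' : List α) : Prop :=
  l' = l ∨ ∃ (p q : List α) (k : ℕ), 1 ≤ k ∧ l = p ++ q ∧ l' = p ++ List.replicate k e ++ q

/-- A hyperring: `(R, +)` a hypergroup, `(R, ·)` a semi-hypergroup,
with two-sided distributivity. -/
structure Hyperring (R : Type*) where
  add : Hyperop R
  mul : Hyperop R
  add_assoc : add.IsAssoc
  add_repro : add.IsReproductive
  mul_assoc : mul.IsAssoc
  left_distrib : ∀ x y z : R, mul.sop {x} (add.op y z) = add.sop (mul.op x y) (mul.op x z)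
  right_distrib : ∀ x y z : R, mul.sop (add.op y z) {x} = add.sop (mul.op y x) (mul.op z x)

namespace Hyperring

variable {R : Type*}

/-- Sum of products: `ll` is a list of lists; each inner list is multiplied,
the results are added up. -/
def SOP (S : Hyperring R) : List (List R) → Set R
  | [] => ∅
  | l :: t => S.add.setFold (S.mul.listProd l) (t.map S.mul.listProd)

/-- A valid sum-of-products expression: nonempty list of nonempty lists. -/
def ValidExpr (S : Hyperring R) (ll : List (List R)) : Prop :=
  ll ≠ [] ∧ ∀ l ∈ ll, l ≠ []

/-- The Vougiouklis relation `Γ`. -/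
def gamma (S : Hyperring R) (x y : R) : Prop :=
  ∃ ll, S.ValidExpr ll ∧ x ∈ S.SOP ll ∧ y ∈ S.SOP ll

/-- The relation `α₊` : permuting the summands. -/
def alphaPlus (S : Hyperring R) (x y : R) : Prop :=
  ∃ ll ll', S.ValidExpr ll ∧ ll.Perm ll' ∧ x ∈ S.SOP ll ∧ y ∈ S.SOP ll'

/-- The relation `α×` : permuting the factors inside each product. -/
def alphaTimes (S : Hyperring R) (x y : R) : Prop :=
  ∃ ll ll', S.ValidExpr ll ∧ List.Forall₂ List.Perm ll ll' ∧ x ∈ S.SOP ll ∧ y ∈ S.SOP ll'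

/-- The Davvaz–Vougiouklis relation `α` : permuting factors inside each
product and then permuting the summands. -/
def alpha (S : Hyperring R) (x y : R) : Prop :=
  ∃ ll mid ll', S.ValidExpr ll ∧ List.Forall₂ List.Perm ll mid ∧ mid.Perm ll' ∧
    x ∈ S.SOP ll ∧ y ∈ S.SOP ll'

/-- Condition `𝔓ₑ` : each product of the second expression is obtained from the
corresponding product of the first by inserting a block of copies of `e`. -/
def CondP (S : Hyperring R) (e : R) (ll ll' : List (List R)) : Prop :=
  List.Forall₂ (InsertBlock e) ll ll'

/-- The relation `(λ^e_×)ₘ`. -/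
def lamTimesN (S : Hyperring R) (e : R) (m : ℕ) (x y : R) : Prop :=
  ∃ ll ll', ll.length = m ∧ S.ValidExpr ll ∧ S.CondP e ll ll' ∧
    ((x ∈ S.SOP ll ∧ y ∈ S.SOP ll') ∨ (x ∈ S.SOP ll' ∧ y ∈ S.SOP ll))

/-- The relation `λ^e_×`. -/
def lamTimes (S : Hyperring R) (e : R) (x y : R) : Prop :=
  ∃ m, 1 ≤ m ∧ S.lamTimesN e m x y

/-- The relation `λₑ = λ^e_× ∪ α₊`. -/
def lam (S : Hyperring R) (e : R) (x y : R) : Prop :=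
  S.lamTimes e x y ∨ S.alphaPlus x y

/-- The relation `Λₑ = λ^e_× ∪ α`. -/
def Lam (S : Hyperring R) (e : R) (x y : R) : Prop :=
  S.lamTimes e x y ∨ S.alpha x y

/-- `M` is a `λₑ`-part. -/
def IsLamPart (S : Hyperring R) (e : R) (M : Set R) : Prop :=
  (∀ ll ll', S.ValidExpr ll → ll.Perm ll' → (S.SOP ll ∩ M).Nonempty → S.SOP ll' ⊆ M) ∧
  (∀ ll ll', S.ValidExpr ll → (S.CondP e ll ll' ∨ S.CondP e ll' ll) →
      (S.SOP ll ∩ M).Nonempty → S.SOP ll' ⊆ M)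

/-- A `λₑ`-strong hyperring. -/
def LamStrong (S : Hyperring R) (e : R) : Prop :=
  (∀ x y, Relation.TransGen (S.lam e) x y →
      (S.mul.op x e ∩ S.mul.op y e).Nonempty ∧ (S.mul.op e x ∩ S.mul.op e y).Nonempty) ∧
  (∀ x z, z ∈ S.mul.op x e → x ∈ S.mul.op z e) ∧
  (∀ x z, z ∈ S.mul.op e x → x ∈ S.mul.op e z)

end Hyperring

section Aux

namespace Hyperop

variable {H : Type*} (h : Hyperop H)

lemma mem_sop {A B : Set H} {u : H} :
    u ∈ h.sop A B ↔ ∃ a ∈ A, ∃ b ∈ B, u ∈ h.op a b := by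
  simp [sop]

lemma mem_sop_left_singleton {x : H} {B : Set H} {u : H} :
    u ∈ h.sop {x} B ↔ ∃ b ∈ B, u ∈ h.op x b := by simp [sop]

lemma mem_sop_right_singleton {A : Set H} {z u : H} :
    u ∈ h.sop A {z} ↔ ∃ t ∈ A, u ∈ h.op t z := by simp [sop]

lemma sop_singleton_singleton (a b : H) : h.sop {a} {b} = h.op a b := by
  simp [sop]

lemma sop_assoc (ha : h.IsAssoc) (A B C : Set H) :
    h.sop (h.sop A B) C = h.sop A (h.sop B C) := by
  ext u
  simp only [mem_sop]
  constructor
  · rintro ⟨t, ⟨x, hx, y, hy, ht⟩, c, hc, hu⟩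
    have h1 : u ∈ h.sop (h.op x y) {c} := (h.mem_sop_right_singleton).2 ⟨t, ht, hu⟩
    rw [ha x y c] at h1
    obtain ⟨s, hs, hu'⟩ := (h.mem_sop_left_singleton).1 h1
    exact ⟨x, hx, s, ⟨y, hy, c, hc, hs⟩, hu'⟩
  · rintro ⟨x, hx, s, ⟨y, hy, c, hc, hs⟩, hu⟩
    have h1 : u ∈ h.sop {x} (h.op y c) := (h.mem_sop_left_singleton).2 ⟨s, hs, hu⟩
    rw [← ha x y c] at h1
    obtain ⟨t, ht, hu'⟩ := (h.mem_sop_right_singleton).1 h1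
    exact ⟨t, ⟨x, hx, y, hy, ht⟩, c, hc, hu'⟩

lemma setFold_append (A : Set H) (l : List (Set H)) (B : Set H) :
    h.setFold A (l ++ [B]) = h.sop (h.setFold A l) B := by
  induction l generalizing A with
  | nil => rfl
  | cons C t ih =>
    show h.setFold (h.sop A C) (t ++ [B]) = h.sop (h.setFold (h.sop A C) t) B
    exact ih (h.sop A C)

lemma setFold_sop_left (ha : h.IsAssoc) (a : H) (A : Set H) (l : List (Set H)) :
    h.setFold (h.sop {a} A) l = h.sop {a} (h.setFold A l) := by
  induction l generalizing A with
  | nil => rfl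
  | cons B t ih =>
    show h.setFold (h.sop (h.sop {a} A) B) t = h.sop {a} (h.setFold (h.sop A B) t)
    rw [h.sop_assoc ha, ih]

/-- extension of `foldl` to a set of starting points. -/
def sFoldl (A : Set H) (l : List H) : Set H := ⋃ x ∈ A, h.foldl x l

lemma sFoldl_nil (A : Set H) : h.sFoldl A [] = A := by
  simp [sFoldl, foldl]

lemma foldl_eq_sFoldl (x : H) (l : List H) : h.foldl x l = h.sFoldl {x} l := by
  simp [sFoldl]

lemma sFoldl_cons (A : Set H) (y : H) (l : List H) :
    h.sFoldl A (y :: l) = h.sFoldl (h.sop A {y}) l := by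
  ext u
  constructor
  · intro hu
    simp only [sFoldl, Set.mem_iUnion] at hu ⊢
    obtain ⟨x, hx, hu⟩ := hu
    have hu' : u ∈ ⋃ z ∈ h.op x y, h.foldl z l := hu
    simp only [Set.mem_iUnion] at hu'
    obtain ⟨z, hz, hu2⟩ := hu'
    exact ⟨z, (h.mem_sop_right_singleton).2 ⟨x, hx, hz⟩, hu2⟩
  · intro hu
    simp only [sFoldl, Set.mem_iUnion] at hu ⊢
    obtain ⟨z, hz, hu⟩ := hu
    obtain ⟨x, hx, hz2⟩ := (h.mem_sop_right_singleton).1 hz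
    refine ⟨x, hx, ?_⟩
    show u ∈ ⋃ z ∈ h.op x y, h.foldl z l
    simp only [Set.mem_iUnion]
    exact ⟨z, hz2, hu⟩

lemma sFoldl_append (A : Set H) (l : List H) (a : H) :
    h.sFoldl A (l ++ [a]) = h.sop (h.sFoldl A l) {a} := by
  induction l generalizing A with
  | nil =>
    rw [List.nil_append, sFoldl_cons, sFoldl_nil, sFoldl_nil]
  | cons y t ih =>
    rw [List.cons_append, sFoldl_cons, ih, sFoldl_cons]

lemma sop_sFoldl (ha : h.IsAssoc) (a : H) (A : Set H) (l : List H) :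
    h.sFoldl (h.sop {a} A) l = h.sop {a} (h.sFoldl A l) := by
  induction l generalizing A with
  | nil => rw [sFoldl_nil, sFoldl_nil]
  | cons y t ih =>
    rw [sFoldl_cons, h.sop_assoc ha, ih, sFoldl_cons]

lemma listProd_cons (ha : h.IsAssoc) (a : H) {l : List H} (hl : l ≠ []) :
    h.listProd (a :: l) = h.sop {a} (h.listProd l) := by
  obtain ⟨y, t, rfl⟩ := List.exists_cons_of_ne_nil hl
  have h1 : h.listProd (a :: y :: t) = h.sFoldl (h.op a y) t := rfl
  rw [h1, ← h.sop_singleton_singleton a y, h.sop_sFoldl ha, ← foldl_eq_sFoldl]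
  rfl

lemma listProd_append (a : H) {l : List H} (hl : l ≠ []) :
    h.listProd (l ++ [a]) = h.sop (h.listProd l) {a} := by
  obtain ⟨y, t, rfl⟩ := List.exists_cons_of_ne_nil hl
  show h.foldl y (t ++ [a]) = h.sop (h.foldl y t) {a}
  rw [foldl_eq_sFoldl, sFoldl_append, ← foldl_eq_sFoldl]

/-- strong regularity lifts to the transitive closure. -/
lemma StronglyRegular.transGen {T : H → H → Prop} (hT : h.StronglyRegular T) :
    h.StronglyRegular (Relation.TransGen T) := by
  intro x y hxy a
  induction hxy with
  | single h1 =>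
    exact ⟨fun u hu v hv => .single (((hT _ _ h1 a).1) u hu v hv),
           fun u hu v hv => .single (((hT _ _ h1 a).2) u hu v hv)⟩
  | tail hxb h1 ih =>
    rename_i b c
    constructor
    · intro u hu v hv
      obtain ⟨w, hw⟩ := h.op_nonempty a b
      exact (ih.1 u hu w hw).tail (((hT _ _ h1 a).1) w hw v hv)
    · intro u hu v hv
      obtain ⟨w, hw⟩ := h.op_nonempty b a
      exact (ih.2 u hu w hw).tail (((hT _ _ h1 a).2) w hw v hv)

end Hyperop

lemma InsertBlock.refl {α : Type*} (e : α) (l : List α) : InsertBlock e l l := Or.inl rfl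

lemma InsertBlock.ne_nil {α : Type*} {e : α} {l l' : List α} (hl : l ≠ [])
    (hb : InsertBlock e l l') : l' ≠ [] := by
  rcases hb with rfl | ⟨p, q, k, hk, rfl, rfl⟩
  · exact hl
  · cases k with
    | zero => omega
    | succ n => simp [List.replicate_succ]

lemma InsertBlock.cons {α : Type*} {e : α} {l l' : List α} (a : α)
    (hb : InsertBlock e l l') : InsertBlock e (a :: l) (a :: l') := by
  rcases hb with rfl | ⟨p, q, k, hk, rfl, rfl⟩
  · exact Or.inl rfl
  · exact Or.inr ⟨a :: p, q, k, hk, by simp, by simp⟩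

lemma InsertBlock.append_single {α : Type*} {e : α} {l l' : List α} (a : α)
    (hb : InsertBlock e l l') : InsertBlock e (l ++ [a]) (l' ++ [a]) := by
  rcases hb with rfl | ⟨p, q, k, hk, rfl, rfl⟩
  · exact Or.inl rfl
  · exact Or.inr ⟨p, q ++ [a], k, hk, by simp, by simp⟩

lemma Forall₂_exists_left {α β : Type*} {P : α → β → Prop} :
    ∀ {l₁ : List α} {l₂ : List β}, List.Forall₂ P l₁ l₂ → ∀ b ∈ l₂, ∃ a ∈ l₁, P a b := by
  intro l₁ l₂ h
  induction h with
  | nil => simp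
  | cons hp _ ih =>
    intro b hb
    rcases List.mem_cons.mp hb with rfl | hb
    · exact ⟨_, by simp, hp⟩
    · obtain ⟨a, ha, hpa⟩ := ih b hb
      exact ⟨a, by simp [ha], hpa⟩

namespace Hyperring

variable {R : Type*} (S : Hyperring R)

lemma validExpr_of_condP {e : R} {ll ll' : List (List R)}
    (hv : S.ValidExpr ll) (hc : S.CondP e ll ll') : S.ValidExpr ll' := by
  obtain ⟨hne, hall⟩ := hv
  constructor
  · intro h0
    subst h0
    exact hne (List.length_eq_zero_iff.mp (by simpa using hc.length_eq))
  · intro l' hl'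
    obtain ⟨l, hl, hb⟩ := Forall₂_exists_left hc l' hl'
    exact hb.ne_nil (hall l hl)
lemma sop_add_distrib_left (a : R) (A B : Set R) :
    S.mul.sop {a} (S.add.sop A B) = S.add.sop (S.mul.sop {a} A) (S.mul.sop {a} B) := by
  ext u
  constructor
  · intro hu
    obtain ⟨s, hs, hu⟩ := (S.mul.mem_sop_left_singleton).1 hu
    obtain ⟨b, hb, c, hc, hs⟩ := (S.add.mem_sop).1 hs
    have h1 : u ∈ S.mul.sop {a} (S.add.op b c) :=
      (S.mul.mem_sop_left_singleton).2 ⟨s, hs, hu⟩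
    rw [S.left_distrib] at h1
    obtain ⟨p, hp, q, hq, hu'⟩ := (S.add.mem_sop).1 h1
    exact (S.add.mem_sop).2 ⟨p, (S.mul.mem_sop_left_singleton).2 ⟨b, hb, hp⟩,
      q, (S.mul.mem_sop_left_singleton).2 ⟨c, hc, hq⟩, hu'⟩
  · intro hu
    obtain ⟨p, hp, q, hq, hu⟩ := (S.add.mem_sop).1 hu
    obtain ⟨b, hb, hp'⟩ := (S.mul.mem_sop_left_singleton).1 hp
    obtain ⟨c, hc, hq'⟩ := (S.mul.mem_sop_left_singleton).1 hq
    have h1 : u ∈ S.add.sop (S.mul.op a b) (S.mul.op a c) :=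
      (S.add.mem_sop).2 ⟨p, hp', q, hq', hu⟩
    rw [← S.left_distrib] at h1
    obtain ⟨s, hs, hu'⟩ := (S.mul.mem_sop_left_singleton).1 h1
    exact (S.mul.mem_sop_left_singleton).2 ⟨s, (S.add.mem_sop).2 ⟨b, hb, c, hc, hs⟩, hu'⟩

lemma sop_add_distrib_right (a : R) (A B : Set R) :
    S.mul.sop (S.add.sop A B) {a} = S.add.sop (S.mul.sop A {a}) (S.mul.sop B {a}) := by
  ext u
  constructor
  · intro hu
    obtain ⟨s, hs, hu⟩ := (S.mul.mem_sop_right_singleton).1 hu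
    obtain ⟨b, hb, c, hc, hs⟩ := (S.add.mem_sop).1 hs
    have h1 : u ∈ S.mul.sop (S.add.op b c) {a} :=
      (S.mul.mem_sop_right_singleton).2 ⟨s, hs, hu⟩
    rw [S.right_distrib] at h1
    obtain ⟨p, hp, q, hq, hu'⟩ := (S.add.mem_sop).1 h1
    exact (S.add.mem_sop).2 ⟨p, (S.mul.mem_sop_right_singleton).2 ⟨b, hb, hp⟩,
      q, (S.mul.mem_sop_right_singleton).2 ⟨c, hc, hq⟩, hu'⟩
  · intro hu
    obtain ⟨p, hp, q, hq, hu⟩ := (S.add.mem_sop).1 hu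
    obtain ⟨b, hb, hp'⟩ := (S.mul.mem_sop_right_singleton).1 hp
    obtain ⟨c, hc, hq'⟩ := (S.mul.mem_sop_right_singleton).1 hq
    have h1 : u ∈ S.add.sop (S.mul.op b a) (S.mul.op c a) :=
      (S.add.mem_sop).2 ⟨p, hp', q, hq', hu⟩
    rw [← S.right_distrib] at h1
    obtain ⟨s, hs, hu'⟩ := (S.mul.mem_sop_right_singleton).1 h1
    exact (S.mul.mem_sop_right_singleton).2 ⟨s, (S.add.mem_sop).2 ⟨b, hb, c, hc, hs⟩, hu'⟩

lemma setFold_mul_left (a : R) (A : Set R) (l : List (Set R)) :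
    S.add.setFold (S.mul.sop {a} A) (l.map fun B => S.mul.sop {a} B) =
      S.mul.sop {a} (S.add.setFold A l) := by
  induction l generalizing A with
  | nil => rfl
  | cons B t ih =>
    show S.add.setFold (S.add.sop (S.mul.sop {a} A) (S.mul.sop {a} B))
        (t.map fun B => S.mul.sop {a} B) = S.mul.sop {a} (S.add.setFold (S.add.sop A B) t)
    rw [← S.sop_add_distrib_left, ih]

lemma setFold_mul_right (a : R) (A : Set R) (l : List (Set R)) :
    S.add.setFold (S.mul.sop A {a}) (l.map fun B => S.mul.sop B {a}) =
      S.mul.sop (S.add.setFold A l) {a} := by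
  induction l generalizing A with
  | nil => rfl
  | cons B t ih =>
    show S.add.setFold (S.add.sop (S.mul.sop A {a}) (S.mul.sop B {a}))
        (t.map fun B => S.mul.sop B {a}) = S.mul.sop (S.add.setFold (S.add.sop A B) t) {a}
    rw [← S.sop_add_distrib_right, ih]

lemma SOP_cons_single (a : R) {ll : List (List R)} (hll : ll ≠ []) :
    S.SOP ([a] :: ll) = S.add.sop {a} (S.SOP ll) := by
  obtain ⟨hd, t, rfl⟩ := List.exists_cons_of_ne_nil hll
  show S.add.setFold (S.add.sop {a} (S.mul.listProd hd)) (t.map S.mul.listProd) =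
    S.add.sop {a} (S.add.setFold (S.mul.listProd hd) (t.map S.mul.listProd))
  exact S.add.setFold_sop_left S.add_assoc a _ _

lemma SOP_append_single (a : R) {ll : List (List R)} (hll : ll ≠ []) :
    S.SOP (ll ++ [[a]]) = S.add.sop (S.SOP ll) {a} := by
  obtain ⟨hd, t, rfl⟩ := List.exists_cons_of_ne_nil hll
  show S.add.setFold (S.mul.listProd hd) ((t ++ [[a]]).map S.mul.listProd) = _
  rw [List.map_append]
  show S.add.setFold (S.mul.listProd hd) (t.map S.mul.listProd ++ [{a}]) = _
  rw [S.add.setFold_append]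
  rfl

lemma SOP_map_cons (a : R) {ll : List (List R)} (hv : S.ValidExpr ll) :
    S.SOP (ll.map fun l => a :: l) = S.mul.sop {a} (S.SOP ll) := by
  obtain ⟨hne, hall⟩ := hv
  obtain ⟨hd, t, rfl⟩ := List.exists_cons_of_ne_nil hne
  have hmap : (t.map fun l => a :: l).map S.mul.listProd
      = (t.map S.mul.listProd).map fun B => S.mul.sop {a} B := by
    rw [List.map_map, List.map_map]
    apply List.map_congr_left
    intro l hl
    simp only [Function.comp]
    exact S.mul.listProd_cons S.mul_assoc a (hall l (by simp [hl]))
  show S.add.setFold (S.mul.listProd (a :: hd))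
      ((t.map fun l => a :: l).map S.mul.listProd) = _
  rw [S.mul.listProd_cons S.mul_assoc a (hall hd (by simp)), hmap, S.setFold_mul_left]
  rfl

lemma SOP_map_append (a : R) {ll : List (List R)} (hv : S.ValidExpr ll) :
    S.SOP (ll.map fun l => l ++ [a]) = S.mul.sop (S.SOP ll) {a} := by
  obtain ⟨hne, hall⟩ := hv
  obtain ⟨hd, t, rfl⟩ := List.exists_cons_of_ne_nil hne
  have hmap : (t.map fun l => l ++ [a]).map S.mul.listProd
      = (t.map S.mul.listProd).map fun B => S.mul.sop B {a} := by
    rw [List.map_map, List.map_map]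
    apply List.map_congr_left
    intro l hl
    simp only [Function.comp]
    exact S.mul.listProd_append a (hall l (by simp [hl]))
  show S.add.setFold (S.mul.listProd (hd ++ [a]))
      ((t.map fun l => l ++ [a]).map S.mul.listProd) = _
  rw [S.mul.listProd_append a (hall hd (by simp)), hmap, S.setFold_mul_right]
  rfl

lemma condP_cons_single {e : R} (a : R) {ll ll' : List (List R)} (hc : S.CondP e ll ll') :
    S.CondP e ([a] :: ll) ([a] :: ll') :=
  List.Forall₂.cons (InsertBlock.refl e [a]) hc

lemma condP_append_single {e : R} (a : R) {ll ll' : List (List R)} (hc : S.CondP e ll ll') :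
    S.CondP e (ll ++ [[a]]) (ll' ++ [[a]]) := by
  induction hc with
  | nil => exact List.Forall₂.cons (InsertBlock.refl e [a]) List.Forall₂.nil
  | cons hb _ ih => exact List.Forall₂.cons hb ih

lemma condP_map_cons {e : R} (a : R) {ll ll' : List (List R)} (hc : S.CondP e ll ll') :
    S.CondP e (ll.map fun l => a :: l) (ll'.map fun l => a :: l) := by
  induction hc with
  | nil => exact List.Forall₂.nil
  | cons hb _ ih => exact List.Forall₂.cons (hb.cons a) ih

lemma condP_map_append {e : R} (a : R) {ll ll' : List (List R)} (hc : S.CondP e ll ll') :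
    S.CondP e (ll.map fun l => l ++ [a]) (ll'.map fun l => l ++ [a]) := by
  induction hc with
  | nil => exact List.Forall₂.nil
  | cons hb _ ih => exact List.Forall₂.cons (hb.append_single a) ih

lemma validExpr_cons_single (a : R) {ll : List (List R)} (hv : S.ValidExpr ll) :
    S.ValidExpr ([a] :: ll) := by
  refine ⟨by simp, fun l hl => ?_⟩
  rcases List.mem_cons.mp hl with rfl | hl
  · simp
  · exact hv.2 l hl

lemma validExpr_append_single (a : R) {ll : List (List R)} (hv : S.ValidExpr ll) :
    S.ValidExpr (ll ++ [[a]]) := by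
  refine ⟨by simp, fun l hl => ?_⟩
  rcases List.mem_append.mp hl with hl | hl
  · exact hv.2 l hl
  · rcases List.mem_singleton.mp hl with rfl
    simp

lemma validExpr_map_cons (a : R) {ll : List (List R)} (hv : S.ValidExpr ll) :
    S.ValidExpr (ll.map fun l => a :: l) := by
  refine ⟨by simp [hv.1], fun l hl => ?_⟩
  obtain ⟨l0, _, rfl⟩ := List.mem_map.mp hl
  simp

lemma validExpr_map_append (a : R) {ll : List (List R)} (hv : S.ValidExpr ll) :
    S.ValidExpr (ll.map fun l => l ++ [a]) := by
  refine ⟨by simp [hv.1], fun l hl => ?_⟩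
  obtain ⟨l0, _, rfl⟩ := List.mem_map.mp hl
  simp

lemma lamTimes_refl (e x : R) : S.lamTimes e x x := by
  refine ⟨1, le_refl 1, [[x]], [[x]], rfl, ⟨by simp, by simp⟩,
    List.Forall₂.cons (InsertBlock.refl e [x]) List.Forall₂.nil, Or.inl ⟨?_, ?_⟩⟩ <;>
  · show x ∈ ({x} : Set R)
    rfl

lemma lamTimes_symm {e : R} {x y : R} (h : S.lamTimes e x y) : S.lamTimes e y x := by
  obtain ⟨m, hm, ll, ll', hlen, hv, hc, hxy⟩ := h
  rcases hxy with ⟨h1, h2⟩ | ⟨h1, h2⟩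
  · exact ⟨m, hm, ll, ll', hlen, hv, hc, Or.inr ⟨h2, h1⟩⟩
  · exact ⟨m, hm, ll, ll', hlen, hv, hc, Or.inl ⟨h2, h1⟩⟩

lemma lamTimes_lift {e u v x y : R} (h : S.lamTimes e x y)
    (F : List (List R) → List (List R))
    (hvF : ∀ ll, S.ValidExpr ll → S.ValidExpr (F ll))
    (hcF : ∀ ll ll', S.CondP e ll ll' → S.CondP e (F ll) (F ll'))
    (hxu : ∀ ll, S.ValidExpr ll → x ∈ S.SOP ll → u ∈ S.SOP (F ll))
    (hyv : ∀ ll, S.ValidExpr ll → y ∈ S.SOP ll → v ∈ S.SOP (F ll)) :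
    S.lamTimes e u v := by
  obtain ⟨m, _, ll, ll', _, hv, hc, hxy⟩ := h
  have hv' := S.validExpr_of_condP hv hc
  refine ⟨(F ll).length, List.length_pos_iff.mpr (hvF ll hv).1, F ll, F ll', rfl,
    hvF ll hv, hcF ll ll' hc, ?_⟩
  rcases hxy with ⟨h1, h2⟩ | ⟨h1, h2⟩
  · exact Or.inl ⟨hxu ll hv h1, hyv ll' hv' h2⟩
  · exact Or.inr ⟨hxu ll' hv' h1, hyv ll hv h2⟩

lemma lamTimes_stronglyRegular_add (e : R) : S.add.StronglyRegular (S.lamTimes e) := by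
  intro x y hxy a
  constructor
  · intro u hu v hv
    refine S.lamTimes_lift hxy (fun ll => [a] :: ll)
      (fun ll h => S.validExpr_cons_single a h)
      (fun ll ll' hc => S.condP_cons_single a hc) ?_ ?_
    · intro ll hvll hx
      rw [S.SOP_cons_single a hvll.1]
      exact (S.add.mem_sop_left_singleton).2 ⟨x, hx, hu⟩
    · intro ll hvll hy
      rw [S.SOP_cons_single a hvll.1]
      exact (S.add.mem_sop_left_singleton).2 ⟨y, hy, hv⟩
  · intro u hu v hv
    refine S.lamTimes_lift hxy (fun ll => ll ++ [[a]])
      (fun ll h => S.validExpr_append_single a h)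
      (fun ll ll' hc => S.condP_append_single a hc) ?_ ?_
    · intro ll hvll hx
      rw [S.SOP_append_single a hvll.1]
      exact (S.add.mem_sop_right_singleton).2 ⟨x, hx, hu⟩
    · intro ll hvll hy
      rw [S.SOP_append_single a hvll.1]
      exact (S.add.mem_sop_right_singleton).2 ⟨y, hy, hv⟩

lemma lamTimes_stronglyRegular_mul (e : R) : S.mul.StronglyRegular (S.lamTimes e) := by
  intro x y hxy a
  constructor
  · intro u hu v hv
    refine S.lamTimes_lift hxy (fun ll => ll.map fun l => a :: l)
      (fun ll h => S.validExpr_map_cons a h)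
      (fun ll ll' hc => S.condP_map_cons a hc) ?_ ?_
    · intro ll hvll hx
      rw [S.SOP_map_cons a hvll]
      exact (S.mul.mem_sop_left_singleton).2 ⟨x, hx, hu⟩
    · intro ll hvll hy
      rw [S.SOP_map_cons a hvll]
      exact (S.mul.mem_sop_left_singleton).2 ⟨y, hy, hv⟩
  · intro u hu v hv
    refine S.lamTimes_lift hxy (fun ll => ll.map fun l => l ++ [a])
      (fun ll h => S.validExpr_map_append a h)
      (fun ll ll' hc => S.condP_map_append a hc) ?_ ?_
    · intro ll hvll hx
      rw [S.SOP_map_append a hvll]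
      exact (S.mul.mem_sop_right_singleton).2 ⟨x, hx, hu⟩
    · intro ll hvll hy
      rw [S.SOP_map_append a hvll]
      exact (S.mul.mem_sop_right_singleton).2 ⟨y, hy, hv⟩

end Hyperring

end Aux

/-- `(λ^e_×)*` is a strongly regular equivalence relation on both
`(R, +)` and `(R, ·)`. -/
theorem stmt10 {R : Type*} (S : Hyperring R) (e : R) :
    Equivalence (Relation.TransGen (S.lamTimes e)) ∧
    S.add.StronglyRegular (Relation.TransGen (S.lamTimes e)) ∧
    S.mul.StronglyRegular (Relation.TransGen (S.lamTimes e)) := by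
  refine ⟨⟨fun x => Relation.TransGen.single (S.lamTimes_refl e x), ?_,
      fun h1 h2 => h1.trans h2⟩,
    (S.lamTimes_stronglyRegular_add e).transGen,
    (S.lamTimes_stronglyRegular_mul e).transGen⟩
  intro x y h
  induction h with
  | single h1 => exact Relation.TransGen.single (S.lamTimes_symm h1)
  | tail _ h1 ih => exact (Relation.TransGen.single (S.lamTimes_symm h1)).trans ih
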